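/- For every integer n ≥ 1 and every p ∈ I_n, the real number λ_p := 1/w_{p,n} satisfies λ_p > 1, λ_p is an eigenvalue of M_p regarded as a real matrix, and every complex eigenvalue μ of M_p with μ ≠ λ_p satisfies |μ| < λ_p; in particular the spectral radius of M_p equals 1/w_{p,n}. -/

import Mathlib

open Matrix

noncomputable section

/-- `M1 = [[1,1,0],[0,1,0],[0,0,1]]`. -/
def M1 : Matrix (Fin 3) (Fin 3) ℝ := !![1, 1, 0; 0, 1, 0; 0, 0, 1]

/-- `M2 = [[1,0,0],[1,1,1],[0,0,1]]`. -/
def M2 : Matrix (Fin 3) (Fin 3) ℝ := !![1, 0, 0; 1, 1, 1; 0, 0, 1]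

/-- `M3 = [[1,0,0],[0,1,0],[0,1,1]]`. -/
def M3 : Matrix (Fin 3) (Fin 3) ℝ := !![1, 0, 0; 0, 1, 0; 0, 1, 1]

/- A tuple `p = (p_n, p_n', q_n, …, p_1, p_1', q_1) ∈ ℕ₀^{3n}` is encoded by three
functions `P P' Q : Fin n → ℕ`, where the index `i : Fin n` corresponds to the
subscript `i + 1` (so `P ⟨0,_⟩ = p_1`, …, `P ⟨n-1,_⟩ = p_n`). -/

/-- The transition matrix `M_p = M1^{p_n} M3^{p_n'} M2^{q_n} ⋯ M1^{p_1} M3^{p_1'} M2^{q_1}`. -/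
def Bl (p p' q : ℕ) : Matrix (Fin 3) (Fin 3) ℝ :=
  !![1 + p*q, p, p*q; q, 1, q; p'*q, p', 1 + p'*q]

lemma M1_pow (p : ℕ) : M1 ^ p = !![1, (p:ℝ), 0; 0, 1, 0; 0, 0, 1] := by
  induction p with
  | zero => simp [Matrix.one_fin_three]
  | succ k ih => rw [pow_succ, ih, M1, Matrix.mul_fin_three]; push_cast; norm_num [add_comm]

lemma M2_pow (q : ℕ) : M2 ^ q = !![1, 0, 0; (q:ℝ), 1, (q:ℝ); 0, 0, 1] := by
  induction q with
  | zero => simp [Matrix.one_fin_three]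
  | succ k ih => rw [pow_succ, ih, M2, Matrix.mul_fin_three]; push_cast; norm_num [add_comm]

lemma M3_pow (p : ℕ) : M3 ^ p = !![1, 0, 0; 0, 1, 0; 0, (p:ℝ), 1] := by
  induction p with
  | zero => simp [Matrix.one_fin_three]
  | succ k ih => rw [pow_succ, ih, M3, Matrix.mul_fin_three]; push_cast; norm_num [add_comm]

lemma block_eq (p p' q : ℕ) : M1 ^ p * M3 ^ p' * M2 ^ q = Bl p p' q := by
  rw [M1_pow, M2_pow, M3_pow, Matrix.mul_fin_three, Matrix.mul_fin_three, Bl]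
  norm_num [add_comm]

lemma Bl_mulVec (p p' q : ℕ) (u h s : ℝ) :
    (Bl p p' q).mulVec
      ![u - p*h, h - q*((u - p*h) + (s - p'*h)), s - p'*h] = ![u, h, s] := by
  funext i
  fin_cases i <;>
    simp [Bl, Matrix.mulVec, dotProduct, Fin.sum_univ_three] <;> ring

def Mp (n : ℕ) (P P' Q : Fin n → ℕ) : Matrix (Fin 3) (Fin 3) ℝ :=
  ((List.finRange n).map fun i => M1 ^ P i.rev * M3 ^ P' i.rev * M2 ^ Q i.rev).prod

/-- Membership of the tuple `p` in `I_n`. -/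
def memI (n : ℕ) (P P' Q : Fin n → ℕ) : Prop :=
  (∀ i, 0 < Q i) ∧ (∀ i, 0 < P i + P' i) ∧ (∃ j, 0 < P j) ∧ (∃ k, 0 < P' k)

/-- Finite continued fraction: `cf [a₁, …, a_m] x = 1/(a₁ + 1/(a₂ + ⋯ + 1/(a_m + x)))`. -/
def cf (l : List ℕ) (x : ℝ) : ℝ := l.foldr (fun a y => 1 / (a + y)) x


/-- The (0-indexed) block index `k(j+1) - 1 = n - 1 - (j mod n)` used at step `j + 1`. -/
def blk (n : ℕ) (hn : 0 < n) (j : ℕ) : Fin n :=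
  ⟨n - 1 - j % n, lt_of_le_of_lt (Nat.sub_le _ _) (Nat.sub_lt hn one_pos)⟩

/-- The sequence `(a₁, …, a_{2n}) = (p_n + p_n', q_n, …, p_1 + p_1', q_1)` as a list. -/
def aList (n : ℕ) (hn : 0 < n) (P P' Q : Fin n → ℕ) : List ℕ :=
  (List.range n).flatMap fun i => [P (blk n hn i) + P' (blk n hn i), Q (blk n hn i)]

/-- `isH0 n hn P P' Q h0` says that `h0` is the number `h_{p,0}`: a real number in `(0,1)`
that is a fixed point of `x ↦ 1/(a₁ + 1/(a₂ + ⋯ + 1/(a_{2n} + x)))` (there is exactly one). -/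
def isH0 (n : ℕ) (hn : 0 < n) (P P' Q : Fin n → ℕ) (h0 : ℝ) : Prop :=
  h0 ∈ Set.Ioo (0 : ℝ) 1 ∧ cf (aList n hn P P' Q) h0 = h0

/-- The pair `(w_{p,j}, h_{p,j})`, with `w_{p,0} = 1`, `h_{p,0} = h0`, and for `j ≥ 1`:
`w_{p,j} = w_{p,j-1} − (p_{k(j)} + p'_{k(j)}) h_{p,j-1}`, `h_{p,j} = h_{p,j-1} − q_{k(j)} w_{p,j}`. -/
def wh (n : ℕ) (hn : 0 < n) (P P' Q : Fin n → ℕ) (h0 : ℝ) : ℕ → ℝ × ℝ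
  | 0 => (1, h0)
  | j + 1 =>
    let prev := wh n hn P P' Q h0 j
    let b := blk n hn j
    let w := prev.1 - ((P b : ℝ) + (P' b : ℝ)) * prev.2
    (w, prev.2 - (Q b : ℝ) * w)

/-- The width `w_{p,j}`. -/
def wseq (n : ℕ) (hn : 0 < n) (P P' Q : Fin n → ℕ) (h0 : ℝ) (j : ℕ) : ℝ :=
  (wh n hn P P' Q h0 j).1

/-- The height `h_{p,j}`. -/
def hseq (n : ℕ) (hn : 0 < n) (P P' Q : Fin n → ℕ) (h0 : ℝ) (j : ℕ) : ℝ :=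
  (wh n hn P P' Q h0 j).2

/-- The split ratio `s_p = Σ_{i=0}^∞ p_{k(i+1)} h_{p,i}`. -/
def splitRatio (n : ℕ) (hn : 0 < n) (P P' Q : Fin n → ℕ) (h0 : ℝ) : ℝ :=
  ∑' i : ℕ, (P (blk n hn i) : ℝ) * hseq n hn P P' Q h0 i

/-- The reindexing realizing the shift `T`: the tuple `T(p)` is given by the functions
`P ∘ shiftIdx n hn`, `P' ∘ shiftIdx n hn`, `Q ∘ shiftIdx n hn`. -/
def shiftIdx (n : ℕ) (hn : 0 < n) (i : Fin n) : Fin n :=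
  ⟨(i.val + (n - 1)) % n, Nat.mod_lt _ hn⟩


-- basic recursion lemmas
lemma wseq_zero (n hn P P' Q h0) : wseq n hn P P' Q h0 0 = 1 := rfl
lemma hseq_zero (n hn P P' Q h0) : hseq n hn P P' Q h0 0 = h0 := rfl
lemma wseq_succ (n hn P P' Q h0 j) :
    wseq n hn P P' Q h0 (j+1) =
      wseq n hn P P' Q h0 j
        - ((P (blk n hn j) : ℝ) + (P' (blk n hn j) : ℝ)) * hseq n hn P P' Q h0 j := rfl
lemma hseq_succ (n hn P P' Q h0 j) :
    hseq n hn P P' Q h0 (j+1) =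
      hseq n hn P P' Q h0 j - (Q (blk n hn j) : ℝ) * wseq n hn P P' Q h0 (j+1) := rfl

lemma cf_cons (a : ℕ) (l : List ℕ) (x : ℝ) : cf (a :: l) x = 1 / ((a:ℝ) + cf l x) := rfl

lemma cf_mem_Ioo {l : List ℕ} {x : ℝ} (hl : ∀ a ∈ l, 1 ≤ a) (hx : x ∈ Set.Ioo (0:ℝ) 1) :
    cf l x ∈ Set.Ioo (0:ℝ) 1 := by
  induction l with
  | nil => exact hx
  | cons a l ih =>
    have ha : (1:ℝ) ≤ a := by exact_mod_cast hl a (List.mem_cons_self)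
    have h2 := ih (fun b hb => hl b (List.mem_cons_of_mem a hb))
    have hden : 1 < (a:ℝ) + cf l x := by nlinarith [h2.1, h2.2]
    rw [cf_cons]
    constructor
    · have : (0:ℝ) < (a:ℝ) + cf l x := by linarith
      exact div_pos one_pos this
    · rw [div_lt_one (by linarith)]; linarith

/-- the tail list -/
def Ltail (n : ℕ) (hn : 0 < n) (P P' Q : Fin n → ℕ) (j : ℕ) : List ℕ :=
  ((List.range n).drop j).flatMap
    fun i => [P (blk n hn i) + P' (blk n hn i), Q (blk n hn i)]

lemma Ltail_zero (n hn P P' Q) : Ltail n hn P P' Q 0 = aList n hn P P' Q := by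
  simp [Ltail, aList]

lemma Ltail_n (n hn P P' Q) : Ltail n hn P P' Q n = [] := by
  unfold Ltail
  rw [List.drop_eq_nil_of_le (by simp)]
  rfl

lemma Ltail_succ (n hn P P' Q) {j : ℕ} (hj : j < n) :
    Ltail n hn P P' Q j =
      (P (blk n hn j) + P' (blk n hn j)) :: Q (blk n hn j) :: Ltail n hn P P' Q (j+1) := by
  unfold Ltail
  rw [List.drop_eq_getElem_cons (by simpa using hj)]
  simp

lemma Ltail_mem_one_le (n hn P P' Q) (hI : memI n P P' Q) (j : ℕ) :
    ∀ a ∈ Ltail n hn P P' Q j, 1 ≤ a := by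
  intro a ha
  simp only [Ltail, List.mem_flatMap, List.mem_cons, List.not_mem_nil, or_false] at ha
  obtain ⟨i, -, hi⟩ := ha
  rcases hi with h | h
  · subst h; exact hI.2.1 _
  · subst h; exact hI.1 _

/-- Main invariant: positivity and the cf relation. -/
lemma wh_invariant (n : ℕ) (hn : 0 < n) (P P' Q : Fin n → ℕ) (hI : memI n P P' Q)
    (h0 : ℝ) (hh0 : isH0 n hn P P' Q h0) :
    ∀ j ≤ n, 0 < wseq n hn P P' Q h0 j ∧
      hseq n hn P P' Q h0 j = wseq n hn P P' Q h0 j * cf (Ltail n hn P P' Q j) h0 ∧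
      wseq n hn P P' Q h0 j ≤ 1 ∧ (j = 0 ∨ wseq n hn P P' Q h0 j < 1) := by
  intro j
  induction j with
  | zero =>
    intro _
    refine ⟨one_pos, ?_, le_refl 1, Or.inl rfl⟩
    rw [wseq_zero, hseq_zero, Ltail_zero, one_mul, hh0.2]
  | succ j ih =>
    intro hj1
    have hj : j < n := hj1
    obtain ⟨hw, hh, hw1, -⟩ := ih (le_of_lt hj)
    set a : ℕ := P (blk n hn j) + P' (blk n hn j) with ha
    set b : ℕ := Q (blk n hn j) with hb
    have hmem := Ltail_mem_one_le n hn P P' Q hI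
    have hcf2 : cf (Ltail n hn P P' Q (j+1)) h0 ∈ Set.Ioo (0:ℝ) 1 :=
      cf_mem_Ioo (hmem (j+1)) hh0.1
    set c3 : ℝ := cf (Ltail n hn P P' Q (j+1)) h0 with hc3
    have hL := Ltail_succ n hn P P' Q hj
    have hcfQ : cf (Q (blk n hn j) :: Ltail n hn P P' Q (j+1)) h0 ∈ Set.Ioo (0:ℝ) 1 := by
      apply cf_mem_Ioo _ hh0.1
      intro x hx
      rcases List.mem_cons.mp hx with h | h
      · subst h; exact hI.1 _
      · exact hmem (j+1) x h
    set c2 : ℝ := cf (Q (blk n hn j) :: Ltail n hn P P' Q (j+1)) h0 with hc2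
    have hcfa : cf (Ltail n hn P P' Q j) h0 ∈ Set.Ioo (0:ℝ) 1 :=
      cf_mem_Ioo (hmem j) hh0.1
    set c1 : ℝ := cf (Ltail n hn P P' Q j) h0 with hc1
    -- structural identities
    have e1 : c1 = 1 / ((a:ℝ) + c2) := by rw [hc1, hL]; rfl
    have e2 : c2 = 1 / ((b:ℝ) + c3) := by rw [hc2]; rfl
    have ha1 : (1:ℝ) ≤ a := by
      have := hI.2.1 (blk n hn j); exact_mod_cast this
    have hb1 : (1:ℝ) ≤ b := by
      have := hI.1 (blk n hn j); exact_mod_cast this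
    have hac2 : (0:ℝ) < (a:ℝ) + c2 := by nlinarith [hcfQ.1]
    have hbc3 : (0:ℝ) < (b:ℝ) + c3 := by nlinarith [hcf2.1]
    -- the new w
    have hwnew : wseq n hn P P' Q h0 (j+1) = wseq n hn P P' Q h0 j * c1 * c2 := by
      rw [wseq_succ, hh]
      have : ((P (blk n hn j) : ℝ) + (P' (blk n hn j) : ℝ)) = (a:ℝ) := by
        rw [ha]; push_cast; ring
      rw [this, e1]
      field_simp
      ring
    have hhnew : hseq n hn P P' Q h0 (j+1) = wseq n hn P P' Q h0 (j+1) * c3 := by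
      rw [hseq_succ, hwnew, hh, e1, e2]
      field_simp
      ring
    have hwpos : 0 < wseq n hn P P' Q h0 (j+1) := by
      rw [hwnew]; exact mul_pos (mul_pos hw hcfa.1) hcfQ.1
    have h12 : c1 * c2 < 1 := by nlinarith [hcfa.1, hcfa.2, hcfQ.1, hcfQ.2]
    have hle : wseq n hn P P' Q h0 j * (c1 * c2) ≤ 1 * (c1 * c2) :=
      mul_le_mul_of_nonneg_right hw1 (le_of_lt (mul_pos hcfa.1 hcfQ.1))
    have hlt : wseq n hn P P' Q h0 (j+1) < 1 := by
      rw [hwnew, mul_assoc]; nlinarith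
    refine ⟨hwpos, ?_, le_of_lt hlt, Or.inr hlt⟩
    rw [hhnew, hc3]

section Aux
variable (n : ℕ) (hn : 0 < n) (P P' Q : Fin n → ℕ) (h0 : ℝ)

/-- partial sums of `P' * h`. -/
def Ssum (j : ℕ) : ℝ := ∑ i ∈ Finset.range j, (P' (blk n hn i) : ℝ) * hseq n hn P P' Q h0 i
/-- partial sums of `P * h`. -/
def Usum (j : ℕ) : ℝ := ∑ i ∈ Finset.range j, (P (blk n hn i) : ℝ) * hseq n hn P P' Q h0 i

/-- telescoping for w -/
lemma wseq_eq_one_sub (j : ℕ) :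
    wseq n hn P P' Q h0 j = 1 - (Usum n hn P P' Q h0 j + Ssum n hn P P' Q h0 j) := by
  induction j with
  | zero => simp [Usum, Ssum, wseq_zero]
  | succ j ih =>
    rw [wseq_succ, ih]
    simp only [Usum, Ssum, Finset.sum_range_succ]
    ring

def s0 : ℝ := Ssum n hn P P' Q h0 n / (1 - wseq n hn P P' Q h0 n)
def u0 : ℝ := Usum n hn P P' Q h0 n / (1 - wseq n hn P P' Q h0 n)

def sj (j : ℕ) : ℝ := s0 n hn P P' Q h0 - Ssum n hn P P' Q h0 j
def uj (j : ℕ) : ℝ := u0 n hn P P' Q h0 - Usum n hn P P' Q h0 j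

/-- the eigenvector trajectory -/
def vj (j : ℕ) : Fin 3 → ℝ :=
  ![uj n hn P P' Q h0 j, hseq n hn P P' Q h0 j, sj n hn P P' Q h0 j]

lemma u0_add_s0 (hwn : wseq n hn P P' Q h0 n ≠ 1) :
    u0 n hn P P' Q h0 + s0 n hn P P' Q h0 = 1 := by
  have h1 : Usum n hn P P' Q h0 n + Ssum n hn P P' Q h0 n = 1 - wseq n hn P P' Q h0 n := by
    have := wseq_eq_one_sub n hn P P' Q h0 n; linarith
  rw [u0, s0, ← add_div, h1, div_self (by intro h; apply hwn; linarith)]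

lemma uj_add_sj (hwn : wseq n hn P P' Q h0 n ≠ 1) (j : ℕ) :
    uj n hn P P' Q h0 j + sj n hn P P' Q h0 j = wseq n hn P P' Q h0 j := by
  rw [uj, sj, wseq_eq_one_sub n hn P P' Q h0 j]
  have := u0_add_s0 n hn P P' Q h0 hwn
  ring_nf
  linarith

lemma uj_succ (j : ℕ) : uj n hn P P' Q h0 (j+1)
    = uj n hn P P' Q h0 j - (P (blk n hn j) : ℝ) * hseq n hn P P' Q h0 j := by
  rw [uj, uj, Usum, Usum, Finset.sum_range_succ]; ring

lemma sj_succ (j : ℕ) : sj n hn P P' Q h0 (j+1)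
    = sj n hn P P' Q h0 j - (P' (blk n hn j) : ℝ) * hseq n hn P P' Q h0 j := by
  rw [sj, sj, Ssum, Ssum, Finset.sum_range_succ]; ring

/-- one block maps `v (j+1)` to `v j`. -/
lemma block_step (hwn : wseq n hn P P' Q h0 n ≠ 1) (j : ℕ) :
    (Bl (P (blk n hn j)) (P' (blk n hn j)) (Q (blk n hn j))).mulVec
      (vj n hn P P' Q h0 (j+1)) = vj n hn P P' Q h0 j := by
  have hv : vj n hn P P' Q h0 (j+1) =
      ![uj n hn P P' Q h0 j - (P (blk n hn j) : ℝ) * hseq n hn P P' Q h0 j,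
        hseq n hn P P' Q h0 j - (Q (blk n hn j) : ℝ) *
          ((uj n hn P P' Q h0 j - (P (blk n hn j) : ℝ) * hseq n hn P P' Q h0 j)
            + (sj n hn P P' Q h0 j - (P' (blk n hn j) : ℝ) * hseq n hn P P' Q h0 j)),
        sj n hn P P' Q h0 j - (P' (blk n hn j) : ℝ) * hseq n hn P P' Q h0 j] := by
    rw [vj, uj_succ, sj_succ, hseq_succ]
    congr 2
    rw [wseq_succ, ← uj_add_sj n hn P P' Q h0 hwn j]
    ring
  rw [hv, Bl_mulVec, vj]

lemma prod_mulVec_gen (g : Fin n → Matrix (Fin 3) (Fin 3) ℝ) (v : ℕ → Fin 3 → ℝ)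
    (hstep : ∀ j (hj : j < n), (g ⟨j, hj⟩).mulVec (v (j+1)) = v j) :
    ∀ k m, m + k = n →
      ((((List.finRange n).drop m).map g).prod).mulVec (v n) = v m := by
  intro k
  induction k with
  | zero =>
    intro m hm
    rw [Nat.add_zero] at hm
    subst hm
    rw [List.drop_eq_nil_of_le (by simp), List.map_nil, List.prod_nil, Matrix.one_mulVec]
  | succ k ih =>
    intro m hm
    have hmn : m < n := by omega
    rw [List.drop_eq_getElem_cons (by simpa using hmn), List.map_cons, List.prod_cons,
      ← Matrix.mulVec_mulVec, ih (m+1) (by omega)]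
    have he : ((List.finRange n)[m]'(by simpa using hmn)) = (⟨m, hmn⟩ : Fin n) := by
      simp
    rw [he, hstep m hmn]

lemma Mp_mulVec_vn (hwn : wseq n hn P P' Q h0 n ≠ 1) :
    (Mp n P P' Q).mulVec (vj n hn P P' Q h0 n) = vj n hn P P' Q h0 0 := by
  have hg : Mp n P P' Q =
      (((List.finRange n).drop 0).map
        (fun i : Fin n => Bl (P (blk n hn i.val)) (P' (blk n hn i.val)) (Q (blk n hn i.val)))).prod := by
    rw [List.drop_zero, Mp]
    congr 1
    apply List.map_congr_left
    intro i _
    rw [block_eq]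
    have : i.rev = blk n hn i.val := by
      apply Fin.ext
      simp [Fin.rev, blk, Nat.mod_eq_of_lt i.isLt]
      omega
    rw [this]
  rw [hg]
  apply prod_mulVec_gen n
    (fun i : Fin n => Bl (P (blk n hn i.val)) (P' (blk n hn i.val)) (Q (blk n hn i.val)))
    (vj n hn P P' Q h0) _ n 0 (by omega)
  intro j hj
  exact block_step n hn P P' Q h0 hwn j

end Aux

def nd (A : Matrix (Fin 3) (Fin 3) ℝ) : Prop := (∀ i j, 0 ≤ A i j) ∧ (∀ i, 0 < A i i)

lemma nd_one : nd 1 := by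
  constructor
  · intro i j; by_cases h : i = j <;> simp [Matrix.one_apply, h]
  · intro i; simp

lemma nd_mul {A B : Matrix (Fin 3) (Fin 3) ℝ} (hA : nd A) (hB : nd B) : nd (A * B) := by
  constructor
  · intro i j
    rw [Matrix.mul_apply]
    exact Finset.sum_nonneg fun k _ => mul_nonneg (hA.1 i k) (hB.1 k j)
  · intro i
    rw [Matrix.mul_apply]
    exact Finset.sum_pos' (fun k _ => mul_nonneg (hA.1 i k) (hB.1 k i))
      ⟨i, Finset.mem_univ i, mul_pos (hA.2 i) (hB.2 i)⟩

lemma nd_prod (l : List (Matrix (Fin 3) (Fin 3) ℝ)) (h : ∀ A ∈ l, nd A) : nd l.prod := by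
  induction l with
  | nil => exact nd_one
  | cons B t ih =>
    rw [List.prod_cons]
    exact nd_mul (h B (List.mem_cons_self)) (ih fun A hA => h A (List.mem_cons_of_mem B hA))

lemma prod_entry_pos (l : List (Matrix (Fin 3) (Fin 3) ℝ)) (h : ∀ A ∈ l, nd A)
    (A : Matrix (Fin 3) (Fin 3) ℝ) (hA : A ∈ l) (i j : Fin 3) (hij : 0 < A i j) :
    0 < l.prod i j := by
  induction l with
  | nil => simp at hA
  | cons B t ih =>
    have ht : ∀ C ∈ t, nd C := fun C hC => h C (List.mem_cons_of_mem B hC)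
    have hnt := nd_prod t ht
    have hnB := h B (List.mem_cons_self)
    rw [List.prod_cons, Matrix.mul_apply]
    rcases List.mem_cons.mp hA with rfl | hA'
    · exact Finset.sum_pos' (fun k _ => mul_nonneg (hnB.1 i k) (hnt.1 k j))
        ⟨j, Finset.mem_univ j, mul_pos hij (hnt.2 j)⟩
    · exact Finset.sum_pos' (fun k _ => mul_nonneg (hnB.1 i k) (hnt.1 k j))
        ⟨i, Finset.mem_univ i, mul_pos (hnB.2 i) (ih ht hA')⟩

lemma mem_spectrum_of_eigen {K : Type*} [Field K] (A : Matrix (Fin 3) (Fin 3) K)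
    (lam : K) (v : Fin 3 → K) (hv : v ≠ 0) (h : A.mulVec v = lam • v) :
    lam ∈ spectrum K A := by
  rw [spectrum.mem_iff]
  intro hu
  rw [Matrix.isUnit_iff_isUnit_det, isUnit_iff_ne_zero] at hu
  apply hu
  rw [← Matrix.exists_mulVec_eq_zero_iff]
  refine ⟨v, hv, ?_⟩
  rw [Algebra.algebraMap_eq_smul_one, Matrix.sub_mulVec, Matrix.smul_mulVec,
    Matrix.one_mulVec, h, sub_self]

lemma exists_eigen_of_mem_spectrum {K : Type*} [Field K] (A : Matrix (Fin 3) (Fin 3) K)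
    {μ : K} (hμ : μ ∈ spectrum K A) : ∃ w, w ≠ 0 ∧ A.mulVec w = μ • w := by
  rw [spectrum.mem_iff] at hμ
  rw [Matrix.isUnit_iff_isUnit_det, isUnit_iff_ne_zero, not_not,
    ← Matrix.exists_mulVec_eq_zero_iff] at hμ
  obtain ⟨v, hv, h⟩ := hμ
  refine ⟨v, hv, ?_⟩
  rw [Algebra.algebraMap_eq_smul_one, Matrix.sub_mulVec, Matrix.smul_mulVec,
    Matrix.one_mulVec, sub_eq_zero] at h
  exact h.symm

lemma specrad_eq (A : Matrix (Fin 3) (Fin 3) ℂ) (lam : ℝ) (hl : 0 ≤ lam)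
    (h1 : (lam : ℂ) ∈ spectrum ℂ A) (h2 : ∀ μ ∈ spectrum ℂ A, ‖μ‖ ≤ lam) :
    spectralRadius ℂ A = ENNReal.ofReal lam := by
  apply le_antisymm
  · apply iSup₂_le
    intro μ hμ
    rw [← enorm_eq_nnnorm, ← ofReal_norm]
    exact ENNReal.ofReal_le_ofReal (h2 μ hμ)
  · have hle := le_iSup₂ (f := fun (k : ℂ) (_ : k ∈ spectrum ℂ A) => (‖k‖₊ : ENNReal)) (lam : ℂ) h1
    refine le_trans (le_of_eq ?_) hle
    rw [← enorm_eq_nnnorm, ← ofReal_norm, Complex.norm_of_nonneg hl]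

lemma perron3 (A : Matrix (Fin 3) (Fin 3) ℝ) (hA : ∀ i j, 0 < A i j)
    (v : Fin 3 → ℝ) (hv : ∀ i, 0 < v i) (lam : ℝ)
    (hAv : A.mulVec v = lam • v)
    (μ : ℂ) (w : Fin 3 → ℂ) (hw : w ≠ 0)
    (hAw : (A.map (fun x => (x : ℂ))).mulVec w = μ • w) (hne : μ ≠ (lam : ℂ)) :
    ‖μ‖ < lam := by
  -- lam is positive
  have hAv' : ∀ i, ∑ j, A i j * v j = lam * v i := by
    intro i
    have := congrFun hAv i
    simpa [Matrix.mulVec, dotProduct] using this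
  have hlam : 0 < lam := by
    have h := hAv' 0
    have : 0 < ∑ j, A 0 j * v j :=
      Finset.sum_pos (fun j _ => mul_pos (hA 0 j) (hv j)) Finset.univ_nonempty
    rw [h] at this
    by_contra hneg
    push_neg at hneg
    nlinarith [hv 0]
  -- the eigen equation pointwise
  have hAw' : ∀ i, ∑ j, (A i j : ℂ) * w j = μ * w i := by
    intro i
    have := congrFun hAw i
    simpa [Matrix.mulVec, dotProduct, Matrix.map_apply] using this
  -- maximizing index
  obtain ⟨i0, -, hmax⟩ := Finset.exists_max_image Finset.univ
    (fun i => ‖w i‖ / v i) Finset.univ_nonempty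
  set t : ℝ := ‖w i0‖ / v i0 with ht
  obtain ⟨i1, hi1t⟩ := Function.ne_iff.mp hw
  have hi1 : w i1 ≠ 0 := by simpa using hi1t
  have ht0 : 0 < t := by
    have h1 : ‖w i1‖ / v i1 ≤ t := hmax i1 (Finset.mem_univ i1)
    have : 0 < ‖w i1‖ / v i1 :=
      div_pos (by simpa [norm_pos_iff] using hi1) (hv i1)
    linarith
  have hb : ∀ j, ‖w j‖ ≤ t * v j := by
    intro j
    have := hmax j (Finset.mem_univ j)
    rw [div_le_iff₀ (hv j)] at this
    linarith [this]
  have hi0eq : ‖w i0‖ = t * v i0 := by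
    rw [ht, div_mul_cancel₀ _ (hv i0).ne']
  -- the chain of inequalities at i0
  have key : ‖μ‖ * (t * v i0) ≤ lam * (t * v i0) := by
    have e1 : ‖μ * w i0‖ = ‖μ‖ * (t * v i0) := by
      rw [norm_mul, hi0eq]
    have e2 : ‖∑ j, (A i0 j : ℂ) * w j‖ ≤ ∑ j, A i0 j * ‖w j‖ := by
      refine le_trans (norm_sum_le _ _) ?_
      apply le_of_eq
      congr 1
      funext j
      rw [norm_mul, Complex.norm_of_nonneg (hA i0 j).le]
    have e3 : ∑ j, A i0 j * ‖w j‖ ≤ ∑ j, A i0 j * (t * v j) :=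
      Finset.sum_le_sum fun j _ => mul_le_mul_of_nonneg_left (hb j) (hA i0 j).le
    have e4 : ∑ j, A i0 j * (t * v j) = lam * (t * v i0) := by
      have : ∑ j, A i0 j * (t * v j) = t * ∑ j, A i0 j * v j := by
        rw [Finset.mul_sum]; congr 1; funext j; ring
      rw [this, hAv' i0]; ring
    calc ‖μ‖ * (t * v i0) = ‖μ * w i0‖ := e1.symm
      _ = ‖∑ j, (A i0 j : ℂ) * w j‖ := by rw [hAw' i0]
      _ ≤ ∑ j, A i0 j * ‖w j‖ := e2
      _ ≤ ∑ j, A i0 j * (t * v j) := e3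
      _ = lam * (t * v i0) := e4
  have htv : 0 < t * v i0 := mul_pos ht0 (hv i0)
  have hle : ‖μ‖ ≤ lam := le_of_mul_le_mul_right key htv
  rcases lt_or_eq_of_le hle with h | habs
  · exact h
  -- equality case: derive μ = lam, contradiction
  exfalso
  -- all inequalities above are equalities
  have e2' : ‖∑ j, (A i0 j : ℂ) * w j‖ ≤ ∑ j, A i0 j * ‖w j‖ := by
    refine le_trans (norm_sum_le _ _) ?_
    apply le_of_eq; congr 1; funext j
    rw [norm_mul, Complex.norm_of_nonneg (hA i0 j).le]
  have e3' : ∑ j, A i0 j * ‖w j‖ ≤ ∑ j, A i0 j * (t * v j) :=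
    Finset.sum_le_sum fun j _ => mul_le_mul_of_nonneg_left (hb j) (hA i0 j).le
  have e4' : ∑ j, A i0 j * (t * v j) = lam * (t * v i0) := by
    have : ∑ j, A i0 j * (t * v j) = t * ∑ j, A i0 j * v j := by
      rw [Finset.mul_sum]; congr 1; funext j; ring
    rw [this, hAv' i0]; ring
  have eabs : ‖∑ j, (A i0 j : ℂ) * w j‖ = lam * (t * v i0) := by
    have : ‖∑ j, (A i0 j : ℂ) * w j‖ = ‖μ * w i0‖ := by rw [hAw' i0]
    rw [this, norm_mul, hi0eq, ← habs]
  have hsum_eq : ∑ j, A i0 j * ‖w j‖ = ∑ j, A i0 j * (t * v j) := by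
    apply le_antisymm e3'
    rw [e4', ← eabs]
    exact e2'
  -- each |w j| = t * v j
  have hwj : ∀ j, ‖w j‖ = t * v j := by
    have := (Finset.sum_eq_sum_iff_of_le
      (fun j _ => mul_le_mul_of_nonneg_left (hb j) (hA i0 j).le)).mp hsum_eq
    intro j
    have hj := this j (Finset.mem_univ j)
    exact mul_left_cancel₀ (hA i0 j).ne' hj
  have hwj0 : ∀ j, w j ≠ 0 := by
    intro j
    have : 0 < ‖w j‖ := by rw [hwj j]; exact mul_pos ht0 (hv j)
    simpa [norm_pos_iff] using this
  -- triangle equality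
  set z : Fin 3 → ℂ := fun j => (A i0 j : ℂ) * w j with hz
  have hz0 : ∀ j, z j ≠ 0 := fun j =>
    mul_ne_zero (by exact_mod_cast (hA i0 j).ne') (hwj0 j)
  have hzabs : ∀ j, ‖z j‖ = A i0 j * ‖w j‖ := by
    intro j
    rw [hz, norm_mul, Complex.norm_of_nonneg (hA i0 j).le]
  have htri : ‖z 0 + z 1 + z 2‖
      = ‖z 0‖ + ‖z 1‖ + ‖z 2‖ := by
    calc ‖z 0 + z 1 + z 2‖ = ‖∑ j, z j‖ := by
          rw [Fin.sum_univ_three]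
      _ = lam * (t * v i0) := eabs
      _ = ∑ j, A i0 j * (t * v j) := e4'.symm
      _ = ∑ j, A i0 j * ‖w j‖ := hsum_eq.symm
      _ = ‖z 0‖ + ‖z 1‖ + ‖z 2‖ := by
          rw [Fin.sum_univ_three (fun j => A i0 j * ‖w j‖)]
          simp [hzabs]
  have s01 : ‖z 0 + z 1‖ = ‖z 0‖ + ‖z 1‖ := by
    have t1 : ‖z 0 + z 1 + z 2‖ ≤ ‖z 0 + z 1‖ + ‖z 2‖ := norm_add_le _ _
    have t2 : ‖z 0 + z 1‖ ≤ ‖z 0‖ + ‖z 1‖ := norm_add_le _ _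
    linarith [htri]
  have s012 : ‖(z 0 + z 1) + z 2‖ = ‖z 0 + z 1‖ + ‖z 2‖ := by
    linarith [htri]
  have ray01 : SameRay ℝ (z 0) (z 1) := sameRay_iff_norm_add.mpr s01
  have ray012 : SameRay ℝ (z 0 + z 1) (z 2) := sameRay_iff_norm_add.mpr s012
  have hz01ne : z 0 + z 1 ≠ 0 := by
    intro h
    rw [h, norm_zero] at s01
    have h01 : 0 < ‖z 0‖ := norm_pos_iff.mpr (hz0 0)
    have h02 : 0 < ‖z 1‖ := norm_pos_iff.mpr (hz0 1)
    linarith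
  obtain ⟨r1, r2, hr1, hr2, hz1⟩ := ray01.exists_pos (hz0 0) (hz0 1)
  obtain ⟨r3, r4, hr3, hr4, hz2⟩ := ray012.exists_pos hz01ne (hz0 2)
  have hr2' : (r2 : ℂ) ≠ 0 := by exact_mod_cast hr2.ne'
  have hr4' : (r4 : ℂ) ≠ 0 := by exact_mod_cast hr4.ne'
  have e12 : (r1 : ℂ) * z 0 = (r2 : ℂ) * z 1 := by
    simpa [Complex.real_smul] using hz1
  have e34 : (r3 : ℂ) * z 0 + (r3 : ℂ) * z 1 = (r4 : ℂ) * z 2 := by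
    simpa [Complex.real_smul] using hz2
  have hc1 : z 1 = ((r1 / r2 : ℝ) : ℂ) * z 0 := by
    have h : z 1 = ((r1 : ℂ) * z 0) / (r2 : ℂ) := by
      rw [eq_div_iff hr2']; linear_combination -e12
    rw [h]; push_cast; ring
  have hc2 : z 2 = ((r3 / r4 * (1 + r1 / r2) : ℝ) : ℂ) * z 0 := by
    have h : z 2 = ((r3 : ℂ) * (z 0 + z 1)) / (r4 : ℂ) := by
      rw [eq_div_iff hr4']; linear_combination -e34
    rw [h, hc1]; push_cast; field_simp
  set c1 : ℝ := r1 / r2 with hc1d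
  set c2 : ℝ := r3 / r4 * (1 + r1 / r2) with hc2d
  have hc1p : 0 < c1 := div_pos hr1 hr2
  have hc2p : 0 < c2 := by
    apply mul_pos (div_pos hr3 hr4)
    nlinarith
  -- express w as a positive real vector times w 0
  set ρ : Fin 3 → ℝ := ![1, c1 * A i0 0 / A i0 1, c2 * A i0 0 / A i0 2] with hρ
  have hρ0 : ρ 0 = 1 := rfl
  have hρ1 : ρ 1 = c1 * A i0 0 / A i0 1 := rfl
  have hρ2 : ρ 2 = c2 * A i0 0 / A i0 2 := rfl
  have hρpos : ∀ j, 0 < ρ j := by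
    intro j
    fin_cases j
    · exact (show (0:ℝ) < ρ 0 by rw [hρ0]; norm_num)
    · exact (show (0:ℝ) < ρ 1 from hρ1 ▸ div_pos (mul_pos hc1p (hA i0 0)) (hA i0 1))
    · exact (show (0:ℝ) < ρ 2 from hρ2 ▸ div_pos (mul_pos hc2p (hA i0 0)) (hA i0 2))
  have hA1' : ((A i0 1 : ℝ) : ℂ) ≠ 0 := by exact_mod_cast (hA i0 1).ne'
  have hA2' : ((A i0 2 : ℝ) : ℂ) ≠ 0 := by exact_mod_cast (hA i0 2).ne'
  have hwρ : ∀ j, w j = ((ρ j : ℝ) : ℂ) * w 0 := by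
    intro j
    fin_cases j
    · exact (show w 0 = ((ρ 0 : ℝ) : ℂ) * w 0 by rw [hρ0]; push_cast; ring)
    · have h1 : (A i0 1 : ℂ) * w 1 = (c1 : ℂ) * ((A i0 0 : ℂ) * w 0) := by
        have := hc1
        simp only [hz] at this
        exact this
      have h : w 1 = ((c1 : ℂ) * (A i0 0 : ℂ) * w 0) / (A i0 1 : ℂ) := by
        rw [eq_div_iff hA1']; linear_combination h1
      exact (show w 1 = ((ρ 1 : ℝ) : ℂ) * w 0 by
        rw [h, hρ1]; push_cast; field_simp)
    · have h2 : (A i0 2 : ℂ) * w 2 = (c2 : ℂ) * ((A i0 0 : ℂ) * w 0) := by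
        have := hc2
        simp only [hz] at this
        exact this
      have h : w 2 = ((c2 : ℂ) * (A i0 0 : ℂ) * w 0) / (A i0 2 : ℂ) := by
        rw [eq_div_iff hA2']; linear_combination h2
      exact (show w 2 = ((ρ 2 : ℝ) : ℂ) * w 0 by
        rw [h, hρ2]; push_cast; field_simp)
  -- conclude μ is the positive real number ∑ A 0 j * ρ j
  have hw00 : w 0 ≠ 0 := hwj0 0
  have hkey := hAw' 0
  have hρ0 : ρ 0 = 1 := rfl
  have hmain : ((∑ j, A 0 j * ρ j : ℝ) : ℂ) = μ := by
    have hsum : ∑ j, (A 0 j : ℂ) * w j = ((∑ j, A 0 j * ρ j : ℝ) : ℂ) * w 0 := by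
      push_cast
      rw [Finset.sum_mul]
      congr 1
      funext j
      rw [hwρ j]
      ring
    have h : ((∑ j, A 0 j * ρ j : ℝ) : ℂ) * w 0 = μ * w 0 := by rw [← hsum]; exact hkey
    exact mul_right_cancel₀ hw00 h
  set x : ℝ := ∑ j, A 0 j * ρ j with hx
  have hxpos : 0 < x :=
    Finset.sum_pos (fun j _ => mul_pos (hA 0 j) (hρpos j)) Finset.univ_nonempty
  have : ‖μ‖ = x := by
    rw [← hmain, Complex.norm_of_nonneg hxpos.le]
  have hxlam : x = lam := by rw [← this, habs]
  apply hne
  rw [← hmain, hxlam]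


lemma nd_Bl (p p' q : ℕ) : nd (Bl p p' q) := by
  constructor
  · intro i j
    fin_cases i <;> fin_cases j <;> simp [Bl] <;> positivity
  · intro i
    fin_cases i <;> simp [Bl] <;> positivity

lemma Mp_eq (n : ℕ) (P P' Q : Fin n → ℕ) :
    Mp n P P' Q = ((List.finRange n).map fun i => Bl (P i.rev) (P' i.rev) (Q i.rev)).prod := by
  rw [Mp]
  congr 1
  apply List.map_congr_left
  intro i _
  rw [block_eq]

lemma Bl_mem (n : ℕ) (P P' Q : Fin n → ℕ) (k : Fin n) :
    Bl (P k) (P' k) (Q k) ∈ (List.finRange n).map fun i => Bl (P i.rev) (P' i.rev) (Q i.rev) := by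
  rw [List.mem_map]
  exact ⟨k.rev, List.mem_finRange _, by rw [Fin.rev_rev]⟩

lemma mulVec_map_coe (A : Matrix (Fin 3) (Fin 3) ℝ) (v : Fin 3 → ℝ) :
    (A.map fun x => (x : ℂ)).mulVec (fun i => ((v i : ℝ) : ℂ))
      = fun i => ((A.mulVec v i : ℝ) : ℂ) := by
  funext i
  simp only [Matrix.mulVec, dotProduct, Matrix.map_apply]
  push_cast
  rfl

lemma Mp_pos (n : ℕ) (hn : 0 < n) (P P' Q : Fin n → ℕ) (hI : memI n P P' Q) :
    ∀ i j, 0 < Mp n P P' Q i j := by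
  obtain ⟨hQ, hPP, ⟨j0, hj0⟩, ⟨k0, hk0⟩⟩ := hI
  rw [Mp_eq]
  set l := (List.finRange n).map fun i => Bl (P i.rev) (P' i.rev) (Q i.rev) with hl
  have hnd : ∀ A ∈ l, nd A := by
    intro A hA
    rw [hl, List.mem_map] at hA
    obtain ⟨i, -, rfl⟩ := hA
    exact nd_Bl _ _ _
  have hdiag := (nd_prod l hnd).2
  have hmemj0 := Bl_mem n P P' Q j0
  have hmemk0 := Bl_mem n P P' Q k0
  have hQj0 : (0:ℝ) < Q j0 := by exact_mod_cast hQ j0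
  have hQk0 : (0:ℝ) < Q k0 := by exact_mod_cast hQ k0
  have hPj0 : (0:ℝ) < P j0 := by exact_mod_cast hj0
  have hPk0 : (0:ℝ) < P' k0 := by exact_mod_cast hk0
  intro i j
  fin_cases i <;> fin_cases j
  · exact hdiag 0
  · exact prod_entry_pos l hnd _ hmemj0 0 1 (by
      show (0:ℝ) < Bl (P j0) (P' j0) (Q j0) 0 1
      simpa [Bl] using hPj0)
  · exact prod_entry_pos l hnd _ hmemj0 0 2 (by
      show (0:ℝ) < Bl (P j0) (P' j0) (Q j0) 0 2
      simp [Bl]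
      exact mul_pos hPj0 hQj0)
  · exact prod_entry_pos l hnd _ hmemj0 1 0 (by
      show (0:ℝ) < Bl (P j0) (P' j0) (Q j0) 1 0
      simpa [Bl] using hQj0)
  · exact hdiag 1
  · exact prod_entry_pos l hnd _ hmemj0 1 2 (by
      show (0:ℝ) < Bl (P j0) (P' j0) (Q j0) 1 2
      simpa [Bl] using hQj0)
  · exact prod_entry_pos l hnd _ hmemk0 2 0 (by
      show (0:ℝ) < Bl (P k0) (P' k0) (Q k0) 2 0
      simp [Bl]
      exact mul_pos hPk0 hQk0)
  · exact prod_entry_pos l hnd _ hmemk0 2 1 (by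
      show (0:ℝ) < Bl (P k0) (P' k0) (Q k0) 2 1
      simpa [Bl] using hPk0)
  · exact hdiag 2

/-- `λ_p = 1/w_{p,n} > 1` is an eigenvalue of the real matrix `M_p`, every
complex eigenvalue `μ ≠ λ_p` satisfies `|μ| < λ_p`, and the spectral radius of `M_p`
equals `1/w_{p,n}`. -/
theorem stmt1 (n : ℕ) (hn : 0 < n) (P P' Q : Fin n → ℕ) (hI : memI n P P' Q)
    (h0 : ℝ) (hh0 : isH0 n hn P P' Q h0) :
    1 < 1 / wseq n hn P P' Q h0 n ∧
    (1 / wseq n hn P P' Q h0 n) ∈ spectrum ℝ (Mp n P P' Q) ∧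
    (∀ μ : ℂ, μ ∈ spectrum ℂ ((Mp n P P' Q).map (fun x => (x : ℂ))) →
      μ ≠ ((1 / wseq n hn P P' Q h0 n : ℝ) : ℂ) →
      ‖μ‖ < 1 / wseq n hn P P' Q h0 n) ∧
    spectralRadius ℂ ((Mp n P P' Q).map (fun x => (x : ℂ)))
      = ENNReal.ofReal (1 / wseq n hn P P' Q h0 n) := by
  have hinv := wh_invariant n hn P P' Q hI h0 hh0
  obtain ⟨hWpos, hWh, hWle, hWor⟩ := hinv n (le_refl n)
  set W := wseq n hn P P' Q h0 n with hWd
  have hWlt : W < 1 := hWor.resolve_left (by omega)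
  have hW1 : W ≠ 1 := ne_of_lt hWlt
  have hhn : hseq n hn P P' Q h0 n = W * h0 := by
    rw [hWh, Ltail_n]; rfl
  have hlam1 : (1:ℝ) < 1 / W := (one_lt_div hWpos).mpr hWlt
  have hlam0 : (0:ℝ) < 1 / W := lt_trans one_pos hlam1
  have hhpos : ∀ i ≤ n, 0 < hseq n hn P P' Q h0 i := by
    intro i hi
    obtain ⟨hwp, hhe, -, -⟩ := hinv i hi
    rw [hhe]
    exact mul_pos hwp (cf_mem_Ioo (Ltail_mem_one_le n hn P P' Q hI i) hh0.1).1
  have hUpos : 0 < Usum n hn P P' Q h0 n := by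
    obtain ⟨j0, hj0⟩ := hI.2.2.1
    rw [Usum]
    apply Finset.sum_pos'
    · intro i hi
      exact mul_nonneg (Nat.cast_nonneg _)
        (hhpos i (le_of_lt (Finset.mem_range.mp hi))).le
    · refine ⟨n - 1 - j0.val, Finset.mem_range.mpr (by omega), ?_⟩
      have hb : blk n hn (n - 1 - j0.val) = j0 := by
        apply Fin.ext
        show n - 1 - (n - 1 - j0.val) % n = j0.val
        have hlt := j0.isLt
        rw [Nat.mod_eq_of_lt (by omega)]
        omega
      rw [hb]
      exact mul_pos (by exact_mod_cast hj0) (hhpos _ (by omega))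
  have hSpos : 0 < Ssum n hn P P' Q h0 n := by
    obtain ⟨k0, hk0⟩ := hI.2.2.2
    rw [Ssum]
    apply Finset.sum_pos'
    · intro i hi
      exact mul_nonneg (Nat.cast_nonneg _)
        (hhpos i (le_of_lt (Finset.mem_range.mp hi))).le
    · refine ⟨n - 1 - k0.val, Finset.mem_range.mpr (by omega), ?_⟩
      have hb : blk n hn (n - 1 - k0.val) = k0 := by
        apply Fin.ext
        show n - 1 - (n - 1 - k0.val) % n = k0.val
        have hlt := k0.isLt
        rw [Nat.mod_eq_of_lt (by omega)]
        omega
      rw [hb]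
      exact mul_pos (by exact_mod_cast hk0) (hhpos _ (by omega))
  have h1W : 0 < 1 - W := by linarith
  have hu0 : 0 < u0 n hn P P' Q h0 := div_pos hUpos h1W
  have hs0 : 0 < s0 n hn P P' Q h0 := div_pos hSpos h1W
  set v := vj n hn P P' Q h0 0 with hvd
  have hv0 : v 0 = u0 n hn P P' Q h0 := by simp [hvd, vj, uj, Usum]
  have hv1 : v 1 = h0 := by
    show vj n hn P P' Q h0 0 1 = h0
    rw [vj]
    simp [hseq_zero]
  have hv2 : v 2 = s0 n hn P P' Q h0 := by simp [hvd, vj, sj, Ssum]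
  have hvpos : ∀ i, 0 < v i := by
    intro i
    fin_cases i
    · exact (show (0:ℝ) < v 0 by rw [hv0]; exact hu0)
    · exact (show (0:ℝ) < v 1 by rw [hv1]; exact hh0.1.1)
    · exact (show (0:ℝ) < v 2 by rw [hv2]; exact hs0)
  have hvne : v ≠ 0 := by
    intro h
    have h1 := congrFun h 1
    rw [hv1] at h1
    simp only [Pi.zero_apply] at h1
    exact absurd h1.symm (ne_of_lt hh0.1.1)
  have hUs : Usum n hn P P' Q h0 n = u0 n hn P P' Q h0 * (1 - W) := by
    rw [u0, div_mul_cancel₀ _ h1W.ne']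
  have hSs : Ssum n hn P P' Q h0 n = s0 n hn P P' Q h0 * (1 - W) := by
    rw [s0, div_mul_cancel₀ _ h1W.ne']
  have e0 : uj n hn P P' Q h0 n = W * u0 n hn P P' Q h0 := by
    rw [uj, hUs]; ring
  have e2 : sj n hn P P' Q h0 n = W * s0 n hn P P' Q h0 := by
    rw [sj, hSs]; ring
  have hvn : vj n hn P P' Q h0 n = W • v := by
    funext i
    fin_cases i
    · show vj n hn P P' Q h0 n 0 = (W • v) 0
      rw [vj]
      simp only [Matrix.cons_val_zero, Pi.smul_apply, smul_eq_mul, hv0]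
      exact e0
    · show vj n hn P P' Q h0 n 1 = (W • v) 1
      rw [vj]
      simp only [Matrix.cons_val_one, Matrix.head_cons, Pi.smul_apply, smul_eq_mul, hv1]
      exact hhn
    · show vj n hn P P' Q h0 n 2 = (W • v) 2
      rw [vj]
      simp only [Pi.smul_apply, smul_eq_mul, hv2]
      show sj n hn P P' Q h0 n = W * s0 n hn P P' Q h0
      exact e2
  have hMv : (Mp n P P' Q).mulVec v = (1 / W) • v := by
    have h1 := Mp_mulVec_vn n hn P P' Q h0 hW1
    rw [hvn, Matrix.mulVec_smul] at h1
    have h2 := congrArg (fun x => W⁻¹ • x) h1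
    simp only [smul_smul, inv_mul_cancel₀ hWpos.ne', one_smul] at h2
    rw [one_div, h2, hvd]
  set Ac := (Mp n P P' Q).map (fun x => (x : ℂ)) with hAcd
  set vc : Fin 3 → ℂ := fun i => ((v i : ℝ) : ℂ) with hvcd
  have hvcne : vc ≠ 0 := by
    intro h
    have h1 := congrFun h 1
    rw [hvcd] at h1
    simp only [Pi.zero_apply, Complex.ofReal_eq_zero] at h1
    exact absurd h1 (ne_of_gt (hvpos 1))
  have hAcv : Ac.mulVec vc = ((1 / W : ℝ) : ℂ) • vc := by
    rw [hAcd, hvcd, mulVec_map_coe]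
    funext i
    rw [congrFun hMv i]
    simp only [Pi.smul_apply, smul_eq_mul]
    push_cast
    ring
  have hlamC : ((1 / W : ℝ) : ℂ) ∈ spectrum ℂ Ac :=
    mem_spectrum_of_eigen Ac _ vc hvcne hAcv
  have habsle : ∀ μ ∈ spectrum ℂ Ac, μ ≠ ((1 / W : ℝ) : ℂ) → ‖μ‖ < 1 / W := by
    intro μ hμ hne
    obtain ⟨w, hwne, hww⟩ := exists_eigen_of_mem_spectrum Ac hμ
    exact perron3 (Mp n P P' Q) (Mp_pos n hn P P' Q hI) v hvpos (1 / W) hMv μ w hwne hww hne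
  refine ⟨hlam1, mem_spectrum_of_eigen (Mp n P P' Q) (1 / W) v hvne hMv, habsle, ?_⟩
  apply specrad_eq Ac (1 / W) hlam0.le hlamC
  intro μ hμ
  by_cases hμl : μ = ((1 / W : ℝ) : ℂ)
  · rw [hμl, Complex.norm_of_nonneg hlam0.le]
  · exact (habsle μ hμ hμl).le
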